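/- Let T be a bounded operator on a complex Hilbert space H with N(T) = N(T*). Then σ(T*T) = σ(TT*), σ_ess(T*T) = σ_ess(TT*), and σ_d(T*T) = σ_d(TT*). -/

import Mathlib

open ContinuousLinearMap MeasureTheory

variable {E F : Type*} [NormedAddCommGroup E] [InnerProductSpace ℂ E] [CompleteSpace E]
  [NormedAddCommGroup F] [InnerProductSpace ℂ F] [CompleteSpace F]

/-- The point spectrum (set of eigenvalues). -/
def pointSpec (T : E →L[ℂ] E) : Set ℂ := {l | ∃ x : E, x ≠ 0 ∧ T x = l • x}

/-- The essential spectrum of a (self-adjoint) bounded operator: eigenvalues of infinite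
multiplicity, limit points of the point spectrum, and the continuous spectrum. -/
def essSpec (T : E →L[ℂ] E) : Set ℂ :=
  {l | (¬ FiniteDimensional ℂ (LinearMap.ker ((T - l • (1 : E →L[ℂ] E) : E →L[ℂ] E) : E →ₗ[ℂ] E))) ∨
       l ∈ closure (pointSpec T \ {l}) ∨
       (l ∈ spectrum ℂ T ∧ Function.Injective ⇑(T - l • (1 : E →L[ℂ] E)) ∧
         Dense (Set.range ⇑(T - l • (1 : E →L[ℂ] E))))}

/-- The discrete spectrum: isolated eigenvalues of finite multiplicity. -/
def discSpec (T : E →L[ℂ] E) : Set ℂ :=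
  {l | l ∈ pointSpec T ∧ FiniteDimensional ℂ (LinearMap.ker ((T - l • (1 : E →L[ℂ] E) : E →L[ℂ] E) : E →ₗ[ℂ] E)) ∧
       l ∉ closure (spectrum ℂ T \ {l})}

/-- The minimum modulus m(T) = inf {‖Tx‖ : ‖x‖ = 1}. -/
noncomputable def minMod (T : E →L[ℂ] F) : ℝ := sInf ((fun x => ‖T x‖) '' {x : E | ‖x‖ = 1})

/-- T attains its minimum modulus. -/
def MinAttain (T : E →L[ℂ] F) : Prop := ∃ x : E, ‖x‖ = 1 ∧ ‖T x‖ = minMod T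

/-- T attains its norm. -/
def NormAttain (T : E →L[ℂ] F) : Prop := ∃ x : E, ‖x‖ = 1 ∧ ‖T x‖ = ‖T‖

/-- T is absolutely minimum attaining (AM). -/
def AbsMinAttain (T : E →L[ℂ] F) : Prop :=
  ∀ M : Submodule ℂ E, IsClosed (M : Set E) → MinAttain (T.comp M.subtypeL)

/-- T is absolutely norm attaining (AN). -/
def AbsNormAttain (T : E →L[ℂ] F) : Prop :=
  ∀ M : Submodule ℂ E, IsClosed (M : Set E) → NormAttain (T.comp M.subtypeL)

/-- S is the Moore-Penrose (generalized) inverse of T. -/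
def MoorePenrose (T S : E →L[ℂ] E) : Prop :=
  T ∘L S ∘L T = T ∧ S ∘L T ∘L S = S ∧ IsSelfAdjoint (T ∘L S) ∧ IsSelfAdjoint (S ∘L T)

/-- T is paranormal: ‖Tx‖² ≤ ‖T²x‖‖x‖ for all x. -/
def Paranormal (T : E →L[ℂ] E) : Prop := ∀ x : E, ‖T x‖ ^ 2 ≤ ‖T (T x)‖ * ‖x‖

variable {H : Type*} [NormedAddCommGroup H] [InnerProductSpace ℂ H] [CompleteSpace H]


set_option linter.unusedSectionVars false in
lemma aux_mem_ker_shift {S : H →L[ℂ] H} {l : ℂ} {x : H} :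
    x ∈ LinearMap.ker ((S - l • (1 : H →L[ℂ] H) : H →L[ℂ] H) : H →ₗ[ℂ] H) ↔ S x = l • x := by
  simp [LinearMap.mem_ker, sub_eq_zero]

lemma aux_ker_comp_self (T : H →L[ℂ] H) :
    LinearMap.ker ((adjoint T ∘L T : H →L[ℂ] H) : H →ₗ[ℂ] H) = LinearMap.ker (T : H →ₗ[ℂ] H) := by
  ext x
  constructor
  · intro h
    have h0 : (adjoint T ∘L T) x = 0 := h
    have h2 : ‖T x‖ ^ 2 = 0 := by
      rw [ContinuousLinearMap.apply_norm_sq_eq_inner_adjoint_left T x, h0, inner_zero_left]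
      simp
    have h3 : ‖T x‖ = 0 := by nlinarith [norm_nonneg (T x)]
    exact LinearMap.mem_ker.mpr (norm_eq_zero.mp h3)
  · intro h
    have h0 : T x = 0 := h
    show (adjoint T ∘L T) x = 0
    simp [ContinuousLinearMap.comp_apply, h0]

lemma aux_kerEquiv (T : H →L[ℂ] H) (hk : LinearMap.ker (T : H →ₗ[ℂ] H) = LinearMap.ker ((adjoint T : H →L[ℂ] H) : H →ₗ[ℂ] H)) (l : ℂ) :
    Nonempty ((LinearMap.ker ((adjoint T ∘L T - l • (1 : H →L[ℂ] H) : H →L[ℂ] H) : H →ₗ[ℂ] H)) ≃ₗ[ℂ]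
      (LinearMap.ker ((T ∘L adjoint T - l • (1 : H →L[ℂ] H) : H →L[ℂ] H) : H →ₗ[ℂ] H))) := by
  rcases eq_or_ne l 0 with rfl | hl
  · have h2 : LinearMap.ker ((T ∘L adjoint T : H →L[ℂ] H) : H →ₗ[ℂ] H) = LinearMap.ker ((adjoint T : H →L[ℂ] H) : H →ₗ[ℂ] H) := by
      have := aux_ker_comp_self (adjoint T)
      rwa [adjoint_adjoint] at this
    have h : LinearMap.ker ((adjoint T ∘L T - (0:ℂ) • (1 : H →L[ℂ] H) : H →L[ℂ] H) : H →ₗ[ℂ] H) =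
        LinearMap.ker ((T ∘L adjoint T - (0:ℂ) • (1 : H →L[ℂ] H) : H →L[ℂ] H) : H →ₗ[ℂ] H) := by
      simp only [zero_smul, sub_zero]
      rw [aux_ker_comp_self, h2, hk]
    exact ⟨LinearEquiv.ofEq _ _ h⟩
  · refine ⟨{ toFun := fun x => ⟨T x.1, ?_⟩
              map_add' := fun x y => ?_
              map_smul' := fun c x => ?_
              invFun := fun y => ⟨l⁻¹ • adjoint T y.1, ?_⟩
              left_inv := fun x => ?_
              right_inv := fun y => ?_ }⟩
    · have hx := aux_mem_ker_shift.mp x.2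
      rw [ContinuousLinearMap.comp_apply] at hx
      rw [aux_mem_ker_shift, ContinuousLinearMap.comp_apply, hx, _root_.map_smul]
    · exact Subtype.ext (by show T (x.1 + y.1) = T x.1 + T y.1; exact map_add T _ _)
    · exact Subtype.ext (by show T (c • x.1) = c • T x.1; exact _root_.map_smul T _ _)
    · have hy := aux_mem_ker_shift.mp y.2
      rw [ContinuousLinearMap.comp_apply] at hy
      rw [aux_mem_ker_shift, ContinuousLinearMap.comp_apply]
      rw [_root_.map_smul, _root_.map_smul, hy, _root_.map_smul, smul_smul, smul_smul,
        inv_mul_cancel₀ hl, mul_inv_cancel₀ hl]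
    · have hx := aux_mem_ker_shift.mp x.2
      rw [ContinuousLinearMap.comp_apply] at hx
      exact Subtype.ext (by simp only [hx, smul_smul, inv_mul_cancel₀ hl, one_smul])
    · have hy := aux_mem_ker_shift.mp y.2
      rw [ContinuousLinearMap.comp_apply] at hy
      refine Subtype.ext ?_
      show T (l⁻¹ • adjoint T y.1) = y.1
      rw [_root_.map_smul, hy, smul_smul, inv_mul_cancel₀ hl, one_smul]

lemma aux_ker_bot_iff (T : H →L[ℂ] H) (hk : LinearMap.ker (T : H →ₗ[ℂ] H) = LinearMap.ker ((adjoint T : H →L[ℂ] H) : H →ₗ[ℂ] H)) (l : ℂ) :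
    LinearMap.ker ((adjoint T ∘L T - l • (1 : H →L[ℂ] H) : H →L[ℂ] H) : H →ₗ[ℂ] H) = ⊥ ↔
      LinearMap.ker ((T ∘L adjoint T - l • (1 : H →L[ℂ] H) : H →L[ℂ] H) : H →ₗ[ℂ] H) = ⊥ := by
  obtain ⟨e⟩ := aux_kerEquiv T hk l
  rw [← Submodule.subsingleton_iff_eq_bot, ← Submodule.subsingleton_iff_eq_bot]
  exact ⟨fun h => e.symm.toEquiv.subsingleton, fun h => e.toEquiv.subsingleton⟩

lemma aux_fin_iff (T : H →L[ℂ] H) (hk : LinearMap.ker (T : H →ₗ[ℂ] H) = LinearMap.ker ((adjoint T : H →L[ℂ] H) : H →ₗ[ℂ] H)) (l : ℂ) :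
    FiniteDimensional ℂ (LinearMap.ker ((adjoint T ∘L T - l • (1 : H →L[ℂ] H) : H →L[ℂ] H) : H →ₗ[ℂ] H)) ↔
      FiniteDimensional ℂ (LinearMap.ker ((T ∘L adjoint T - l • (1 : H →L[ℂ] H) : H →L[ℂ] H) : H →ₗ[ℂ] H)) := by
  obtain ⟨e⟩ := aux_kerEquiv T hk l
  exact ⟨fun h => e.finiteDimensional, fun h => e.symm.finiteDimensional⟩

lemma aux_isSelfAdjoint_comp (T : H →L[ℂ] H) : IsSelfAdjoint (adjoint T ∘L T) := by
  rw [IsSelfAdjoint, ContinuousLinearMap.star_eq_adjoint, adjoint_comp, adjoint_adjoint]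

set_option linter.unusedSectionVars false in
lemma aux_selfadj_shift {S : H →L[ℂ] H} (hS : IsSelfAdjoint S) {l : ℂ} (hl : l = (l.re : ℂ)) :
    IsSelfAdjoint (S - l • (1 : H →L[ℂ] H)) := by
  refine hS.sub ?_
  rw [IsSelfAdjoint, star_smul, star_one]
  congr 1
  rw [RCLike.star_def, hl, Complex.conj_ofReal]

lemma aux_dense_iff_inj {S : H →L[ℂ] H} (hS : IsSelfAdjoint S) :
    Dense (Set.range ⇑S) ↔ Function.Injective ⇑S := by
  have horth : (LinearMap.range (S : H →ₗ[ℂ] H))ᗮ = LinearMap.ker (S : H →ₗ[ℂ] H) := by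
    ext y
    simp only [Submodule.mem_orthogonal, LinearMap.mem_range, LinearMap.mem_ker,
      forall_exists_index]
    constructor
    · intro h
      have h2 := h (S (S y)) (S y) rfl
      have h3 := ContinuousLinearMap.adjoint_inner_left S y (S y)
      rw [hS.adjoint_eq] at h3
      rw [h3] at h2
      exact inner_self_eq_zero.mp h2
    · intro h u x hx
      have h3 := ContinuousLinearMap.adjoint_inner_right S x y
      rw [hS.adjoint_eq] at h3
      simp only [ContinuousLinearMap.coe_coe] at h hx
      rw [← hx, ← h3, h, inner_zero_right]
  have hrange : Set.range ⇑S = ↑(LinearMap.range (S : H →ₗ[ℂ] H)) := by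
    ext y; simp [LinearMap.mem_range, Set.mem_range, eq_comm]
  rw [hrange, Submodule.dense_iff_topologicalClosure_eq_top,
    Submodule.topologicalClosure_eq_top_iff, horth, LinearMap.ker_eq_bot, ContinuousLinearMap.coe_coe]

lemma aux_isUnit_swap (T : H →L[ℂ] H) (hk : LinearMap.ker (T : H →ₗ[ℂ] H) = LinearMap.ker ((adjoint T : H →L[ℂ] H) : H →ₗ[ℂ] H))
    (h : IsUnit (adjoint T ∘L T)) : IsUnit (T ∘L adjoint T) := by
  have hbij := ContinuousLinearMap.isUnit_iff_bijective.mp h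
  have hco : ⇑(adjoint T ∘L T) = ⇑(adjoint T) ∘ ⇑T := ContinuousLinearMap.coe_comp' _ _
  have hTinj : Function.Injective ⇑T := by
    have := hbij.1; rw [hco] at this
    exact Function.Injective.of_comp this
  have hTadj_surj : Function.Surjective ⇑(adjoint T) := by
    have := hbij.2; rw [hco] at this
    exact Function.Surjective.of_comp this
  have hTadj_inj : Function.Injective ⇑(adjoint T) := by
    rw [← ContinuousLinearMap.coe_coe (adjoint T), ← LinearMap.ker_eq_bot, ← hk, LinearMap.ker_eq_bot]
    exact hTinj
  have hU : IsUnit (adjoint T) :=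
    ContinuousLinearMap.isUnit_iff_bijective.mpr ⟨hTadj_inj, hTadj_surj⟩
  have hT : IsUnit T := by
    have := hU.star
    rwa [ContinuousLinearMap.star_eq_adjoint, adjoint_adjoint] at this
  have := hT.mul hU
  rwa [ContinuousLinearMap.mul_def] at this

lemma aux_spec_eq (T : H →L[ℂ] H) (hk : LinearMap.ker (T : H →ₗ[ℂ] H) = LinearMap.ker ((adjoint T : H →L[ℂ] H) : H →ₗ[ℂ] H)) :
    spectrum ℂ (adjoint T ∘L T) = spectrum ℂ (T ∘L adjoint T) := by
  have hk' : LinearMap.ker ((adjoint T : H →L[ℂ] H) : H →ₗ[ℂ] H) = LinearMap.ker ((adjoint (adjoint T) : H →L[ℂ] H) : H →ₗ[ℂ] H) := by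
    rw [adjoint_adjoint]; exact hk.symm
  have hswap := spectrum.nonzero_mul_comm (𝕜 := ℂ) (adjoint T) T
  have hc1 : adjoint T * T = adjoint T ∘L T := rfl
  have hc2 : T * adjoint T = T ∘L adjoint T := rfl
  rw [hc1, hc2] at hswap
  ext l
  rcases eq_or_ne l 0 with rfl | hl
  · rw [spectrum.zero_mem_iff, spectrum.zero_mem_iff]
    refine not_congr ⟨aux_isUnit_swap T hk, fun h => ?_⟩
    have := aux_isUnit_swap (adjoint T) hk'
    rw [adjoint_adjoint] at this
    exact this h
  · constructor
    · intro h
      exact (Set.ext_iff.mp hswap l).mp ⟨h, hl⟩ |>.1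
    · intro h
      exact (Set.ext_iff.mp hswap l).mpr ⟨h, hl⟩ |>.1

set_option linter.unusedSectionVars false in
lemma aux_pointSpec_iff (S : H →L[ℂ] H) (l : ℂ) :
    l ∈ pointSpec S ↔ LinearMap.ker ((S - l • (1 : H →L[ℂ] H) : H →L[ℂ] H) : H →ₗ[ℂ] H) ≠ ⊥ := by
  rw [Submodule.ne_bot_iff]
  constructor
  · rintro ⟨x, hx0, hx⟩; exact ⟨x, aux_mem_ker_shift.mpr hx, hx0⟩
  · rintro ⟨x, hx, hx0⟩; exact ⟨x, hx0, aux_mem_ker_shift.mp hx⟩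


theorem stmt12 (T : H →L[ℂ] H) (hk : LinearMap.ker (T : H →ₗ[ℂ] H) = LinearMap.ker ((adjoint T : H →L[ℂ] H) : H →ₗ[ℂ] H)) :
    spectrum ℂ (adjoint T ∘L T) = spectrum ℂ (T ∘L adjoint T) ∧
      essSpec (adjoint T ∘L T) = essSpec (T ∘L adjoint T) ∧
        discSpec (adjoint T ∘L T) = discSpec (T ∘L adjoint T) := by
  have hspec := aux_spec_eq T hk
  have hfin := aux_fin_iff T hk
  have hbot := aux_ker_bot_iff T hk
  have hinj : ∀ l : ℂ, Function.Injective ⇑(adjoint T ∘L T - l • (1 : H →L[ℂ] H)) ↔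
      Function.Injective ⇑(T ∘L adjoint T - l • (1 : H →L[ℂ] H)) := fun l => by
    rw [← ContinuousLinearMap.coe_coe (adjoint T ∘L T - l • (1 : H →L[ℂ] H)),
      ← ContinuousLinearMap.coe_coe (T ∘L adjoint T - l • (1 : H →L[ℂ] H)),
      ← LinearMap.ker_eq_bot, ← LinearMap.ker_eq_bot]
    exact hbot l
  have hpt : pointSpec (adjoint T ∘L T) = pointSpec (T ∘L adjoint T) := by
    ext l
    rw [aux_pointSpec_iff, aux_pointSpec_iff]
    exact not_congr (hbot l)
  have hA : IsSelfAdjoint (adjoint T ∘L T) := aux_isSelfAdjoint_comp T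
  have hB : IsSelfAdjoint (T ∘L adjoint T) := by
    have := aux_isSelfAdjoint_comp (adjoint T); rwa [adjoint_adjoint] at this
  refine ⟨hspec, ?_, ?_⟩
  · ext l
    simp only [essSpec, Set.mem_setOf_eq]
    rw [hpt, hspec]
    refine or_congr (not_congr (hfin l)) (or_congr Iff.rfl ?_)
    constructor
    · rintro ⟨hs, hi, hd⟩
      have hlre : l = (l.re : ℂ) := hB.mem_spectrum_eq_re hs
      refine ⟨hs, (hinj l).mp hi, ?_⟩
      rw [aux_dense_iff_inj (aux_selfadj_shift hB hlre)]
      exact (hinj l).mp hi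
    · rintro ⟨hs, hi, hd⟩
      have hlre : l = (l.re : ℂ) := hB.mem_spectrum_eq_re hs
      refine ⟨hs, (hinj l).mpr hi, ?_⟩
      rw [aux_dense_iff_inj (aux_selfadj_shift hA hlre)]
      exact (hinj l).mpr hi
  · ext l
    simp only [discSpec, Set.mem_setOf_eq]
    rw [hpt, hspec]
    exact and_congr Iff.rfl (and_congr (hfin l) Iff.rfl)
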